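/- In the Johnstone dcpo X = ℕ × (ℕ ∪ {∞}), for m ∈ ℕ and n ∈ ℕ (n ≠ ∞), the principal lower set ↓(m,n) is a chain; and for any m ∈ ℕ, ↓(m,∞) is the supremum in the lattice of Scott closed sets of the chain of Scott closed sets {↓(m,k) : k ∈ ℕ}. -/

import Mathlib

def rUB {α : Type*} (r : α → α → Prop) (D : Set α) (a : α) : Prop := ∀ d ∈ D, r d a

def rLUB {α : Type*} (r : α → α → Prop) (D : Set α) (a : α) : Prop :=
  rUB r D a ∧ ∀ b, rUB r D b → r a b

def rDirected {α : Type*} (r : α → α → Prop) (D : Set α) : Prop :=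
  ∀ a ∈ D, ∀ b ∈ D, ∃ c ∈ D, r a c ∧ r b c

def rScottClosed {α : Type*} (r : α → α → Prop) (A : Set α) : Prop :=
  (∀ x y, r x y → y ∈ A → x ∈ A) ∧
  ∀ D ⊆ A, D.Nonempty → rDirected r D → ∀ a, rLUB r D a → a ∈ A

def rIrred {α : Type*} (r : α → α → Prop) (F : Set α) : Prop :=
  F.Nonempty ∧ ∀ F₁ F₂ : Set α, rScottClosed r F₁ → rScottClosed r F₂ →
    F ⊆ F₁ ∪ F₂ → F ⊆ F₁ ∨ F ⊆ F₂

/-- The Johnstone order on `ℕ × (ℕ ∪ {∞})`: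
`(m, n) ≤ (m', n')` iff `m = m'` and `n ≤ n'`, or `n' = ∞` and `n ≤ m'`. -/
def jle (p q : ℕ × ℕ∞) : Prop :=
  (p.1 = q.1 ∧ p.2 ≤ q.2) ∨ (q.2 = ⊤ ∧ p.2 ≤ (q.1 : ℕ∞))

/-- In the Johnstone dcpo, for `n ≠ ∞` the principal lower set `↓(m, n)` is a
chain; and `↓(m, ∞)` is the supremum in the lattice of Scott closed sets of the
chain `{↓(m, k) : k ∈ ℕ}`. -/

lemma jle_trans {p q r : ℕ × ℕ∞} (h1 : jle p q) (h2 : jle q r) : jle p r := by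
  rcases h1 with ⟨e1, l1⟩ | ⟨t1, l1⟩ <;> rcases h2 with ⟨e2, l2⟩ | ⟨t2, l2⟩
  · exact Or.inl ⟨e1.trans e2, l1.trans l2⟩
  · exact Or.inr ⟨t2, l1.trans l2⟩
  · exact Or.inr ⟨le_antisymm le_top (t1 ▸ l2), e2 ▸ l1⟩
  · rw [t1] at l2; exact absurd l2 (by simp)

lemma scottClosed_down (a : ℕ × ℕ∞) : rScottClosed jle {y | jle y a} := by
  constructor
  · intro x y hxy hy; exact jle_trans hxy hy
  · intro D hD _ _ b hb
    exact hb.2 a hD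

theorem johnstone_down_sets :
    (∀ m n : ℕ, ∀ a ∈ {y | jle y (m, (n : ℕ∞))}, ∀ b ∈ {y | jle y (m, (n : ℕ∞))},
      jle a b ∨ jle b a) ∧
    (∀ m : ℕ,
      rScottClosed jle {y | jle y (m, (⊤ : ℕ∞))} ∧
      (∀ k : ℕ, rScottClosed jle {y | jle y (m, (k : ℕ∞))}) ∧
      (∀ k : ℕ, {y | jle y (m, (k : ℕ∞))} ⊆ {y | jle y (m, (⊤ : ℕ∞))}) ∧
      (∀ A : Set (ℕ × ℕ∞), rScottClosed jle A →
        (∀ k : ℕ, {y | jle y (m, (k : ℕ∞))} ⊆ A) →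
        {y | jle y (m, (⊤ : ℕ∞))} ⊆ A)) := by
  constructor
  · rintro m n a (⟨ea, la⟩ | ⟨ta, _⟩) b hb
    · rcases hb with ⟨eb, lb⟩ | ⟨tb, _⟩
      · rcases le_total a.2 b.2 with h | h
        · exact Or.inl (Or.inl ⟨ea.trans eb.symm, h⟩)
        · exact Or.inr (Or.inl ⟨eb.trans ea.symm, h⟩)
      · exact absurd tb (by simp)
    · exact absurd ta (by simp)
  · intro m
    refine ⟨scottClosed_down _, fun k => scottClosed_down _, fun k => ?_, ?_⟩
    · intro y hy
      exact jle_trans hy (Or.inl ⟨rfl, le_top⟩)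
    · intro A hA hk
      have hmem : ((m, (⊤ : ℕ∞)) : ℕ × ℕ∞) ∈ A := by
        refine hA.2 (Set.range (fun j : ℕ => ((m, (j : ℕ∞)) : ℕ × ℕ∞))) ?_ ⟨(m, 0), ⟨0, rfl⟩⟩ ?_ _ ⟨?_, ?_⟩
        · rintro _ ⟨j, rfl⟩
          exact hk j (Or.inl ⟨rfl, le_refl _⟩)
        · rintro _ ⟨j1, rfl⟩ _ ⟨j2, rfl⟩
          refine ⟨(m, (max j1 j2 : ℕ)), ⟨max j1 j2, rfl⟩, Or.inl ⟨rfl, ?_⟩, Or.inl ⟨rfl, ?_⟩⟩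
          · simpa using Nat.cast_le.mpr (le_max_left j1 j2)
          · simpa using Nat.cast_le.mpr (le_max_right j1 j2)
        · rintro _ ⟨j, rfl⟩
          exact Or.inl ⟨rfl, le_top⟩
        · intro b hb
          by_cases hb2 : b.2 = ⊤
          · by_cases hb1 : b.1 = m
            · exact Or.inl ⟨hb1.symm, by simp [hb2]⟩
            · rcases hb (m, ((b.1 + 1 : ℕ) : ℕ∞)) ⟨b.1 + 1, rfl⟩ with ⟨e, _⟩ | ⟨_, l⟩
              · exact absurd e.symm hb1
              · have l' : ((b.1 + 1 : ℕ) : ℕ∞) ≤ (b.1 : ℕ∞) := l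
                have : b.1 + 1 ≤ b.1 := by exact_mod_cast l'
                omega
          · lift b.2 to ℕ using hb2 with n hn
            rcases hb (m, ((n + 1 : ℕ) : ℕ∞)) ⟨n + 1, rfl⟩ with ⟨_, l⟩ | ⟨t, _⟩
            · rw [← hn] at l
              have l' : ((n + 1 : ℕ) : ℕ∞) ≤ (n : ℕ∞) := l
              have : n + 1 ≤ n := by exact_mod_cast l'
              omega
            · rw [← hn] at t; exact absurd t (ENat.coe_ne_top n)
      intro y hy
      exact hA.1 y (m, ⊤) hy hmem
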